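/- The space (ℂ*)² = (ℂ∖{0})² is not of E_FS-limit type: there exists a sequence of holomorphic maps F = {g_k} from the unit disc Δ to (ℂ*)² that is not normal (as a family of maps into (ℂ*)²) and not compactly divergent, and for which there do NOT exist sequences p_j ∈ Δ with p_j → p₀ ∈ Δ, maps f_j ∈ F, and ρ_j > 0 with ρ_j → 0⁺ such that φ_j(ξ) := f_j(p_j + ρ_j ξ) converges uniformly on every compact subset of ℂ to a non-constant holomorphic curve φ : ℂ → (ℂ*)² with sup_{ξ∈ℂ} E_FS(φ(ξ), φ'(ξ)) < ∞. -/

import Mathlib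

open Filter Topology Metric

/-- The Fubini–Study length function on `ℂ²` (pullback of the Fubini–Study metric on
`ℙ²(ℂ)` under the standard affine chart). -/
noncomputable def fubiniStudyLength2 (z v : EuclideanSpace ℂ (Fin 2)) : ℝ :=
  Real.sqrt (((1 + ‖z‖ ^ 2) * ‖v‖ ^ 2 - ‖(inner ℂ v z : ℂ)‖ ^ 2) / (1 + ‖z‖ ^ 2) ^ 2)

/-- The subset `(ℂ*)² ⊆ ℂ²`. -/
def cStarSq : Set (EuclideanSpace ℂ (Fin 2)) := {w | w 0 ≠ 0 ∧ w 1 ≠ 0}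

section Aux

open Complex

/-- A point of `ℂ²` given by two coordinates. -/
noncomputable def pt (a b : ℂ) : EuclideanSpace ℂ (Fin 2) :=
  (EuclideanSpace.equiv (Fin 2) ℂ).symm ![a, b]

lemma pt_apply_zero (a b : ℂ) : pt a b 0 = a := rfl
lemma pt_apply_one (a b : ℂ) : pt a b 1 = b := rfl

lemma norm_pt_sq (a b : ℂ) : ‖pt a b‖ ^ 2 = ‖a‖ ^ 2 + ‖b‖ ^ 2 := by
  rw [EuclideanSpace.norm_eq, Real.sq_sqrt (by positivity)]
  simp [Fin.sum_univ_two, pt_apply_zero, pt_apply_one]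

lemma norm_pt_ge (a b : ℂ) : ‖a‖ ≤ ‖pt a b‖ := by
  have h := norm_pt_sq a b
  nlinarith [norm_nonneg (pt a b), norm_nonneg a, norm_nonneg b, sq_nonneg ‖b‖]

lemma inner_pt (a b c d : ℂ) :
    (inner ℂ (pt a b) (pt c d) : ℂ) = (starRingEnd ℂ) a * c + (starRingEnd ℂ) b * d := by
  rw [PiLp.inner_apply]
  simp [Fin.sum_univ_two, RCLike.inner_apply, pt_apply_zero, pt_apply_one, mul_comm]

lemma pt_ext (x : EuclideanSpace ℂ (Fin 2)) : x = pt (x 0) (x 1) := by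
  ext i; fin_cases i <;> rfl

lemma fs_eval (a b c d : ℂ) :
    fubiniStudyLength2 (pt a b) (pt c d) =
      Real.sqrt (((1 + (‖a‖ ^ 2 + ‖b‖ ^ 2)) * (‖c‖ ^ 2 + ‖d‖ ^ 2)
          - ‖(starRingEnd ℂ) c * a + (starRingEnd ℂ) d * b‖ ^ 2)
        / (1 + (‖a‖ ^ 2 + ‖b‖ ^ 2)) ^ 2) := by
  unfold fubiniStudyLength2
  rw [norm_pt_sq, norm_pt_sq, inner_pt]

/-- The key lower bound for the Fubini–Study length at the special points. -/
lemma fs_lower (ε u : ℝ) (w : ℂ) (hw : ‖w‖ = 1) (hε0 : 0 < ε) (hε1 : ε ≤ 1) (hu : 0 ≤ u) :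
    u / 3 ≤ fubiniStudyLength2 (pt (ε : ℂ) w) (pt ((ε : ℂ) * ((u : ℂ) * I)) (w * (u : ℂ))) := by
  have hnε : ‖(ε : ℂ)‖ = ε := by
    rw [Complex.norm_real, Real.norm_eq_abs, _root_.abs_of_pos hε0]
  have hnu : ‖(u : ℂ)‖ = u := by
    rw [Complex.norm_real, Real.norm_eq_abs, _root_.abs_of_nonneg hu]
  have hc : ‖(ε : ℂ) * ((u : ℂ) * I)‖ = ε * u := by
    rw [norm_mul, norm_mul, hnε, hnu, Complex.norm_I, mul_one]
  have hd : ‖w * (u : ℂ)‖ = u := by rw [norm_mul, hw, hnu, one_mul]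
  have hww : (starRingEnd ℂ) w * w = 1 := by
    rw [mul_comm, Complex.mul_conj, Complex.normSq_eq_norm_sq, hw]
    norm_num
  have hS : (starRingEnd ℂ) ((ε : ℂ) * ((u : ℂ) * I)) * (ε : ℂ)
      + (starRingEnd ℂ) (w * (u : ℂ)) * w = (u : ℂ) - ((u * ε ^ 2 : ℝ) : ℂ) * I := by
    have h1 : (starRingEnd ℂ) ((ε : ℂ) * ((u : ℂ) * I)) = (ε : ℂ) * ((u : ℂ) * (-I)) := by
      simp [map_mul, Complex.conj_ofReal, Complex.conj_I]
    have h2 : (starRingEnd ℂ) (w * (u : ℂ)) = (starRingEnd ℂ) w * (u : ℂ) := by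
      simp [map_mul, Complex.conj_ofReal]
    rw [h1, h2]
    have h3 : (starRingEnd ℂ) w * (u : ℂ) * w = (u : ℂ) * ((starRingEnd ℂ) w * w) := by
      ring
    rw [h3, hww]
    push_cast
    ring
  rw [fs_eval, hnε, hw, hc, hd, hS]
  have hSn : ‖(u : ℂ) - ((u * ε ^ 2 : ℝ) : ℂ) * I‖ ^ 2 = u ^ 2 * (1 + ε ^ 4) := by
    have hre : ∀ v : ℝ, ((u : ℂ) - (v : ℂ) * I).re = u := fun v => by simp
    have him : ∀ v : ℝ, ((u : ℂ) - (v : ℂ) * I).im = -v := fun v => by simp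
    have hre := hre (u * ε ^ 2)
    have him := him (u * ε ^ 2)
    rw [Complex.sq_norm, Complex.normSq_apply, hre, him]
    ring
  rw [hSn]
  have hq : ((1 + (ε ^ 2 + 1 ^ 2)) * ((ε * u) ^ 2 + u ^ 2) - u ^ 2 * (1 + ε ^ 4))
      / (1 + (ε ^ 2 + 1 ^ 2)) ^ 2 = u ^ 2 * (1 + 3 * ε ^ 2) / (2 + ε ^ 2) ^ 2 := by
    have h2 : (0:ℝ) < 2 + ε ^ 2 := by positivity
    have h2' : (1 : ℝ) + (ε ^ 2 + 1 ^ 2) = 2 + ε ^ 2 := by ring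
    rw [h2']
    congr 1
    ring
  rw [hq]
  have h9 : (u / 3) ^ 2 ≤ u ^ 2 * (1 + 3 * ε ^ 2) / (2 + ε ^ 2) ^ 2 := by
    rw [le_div_iff₀ (by positivity)]
    have hε2 : ε ^ 2 ≤ 1 := by nlinarith
    have hε4 : ε ^ 4 ≤ 1 := by nlinarith
    have key : (4 + 4 * ε ^ 2 + ε ^ 4 : ℝ) ≤ 9 + 27 * ε ^ 2 := by nlinarith [sq_nonneg ε]
    nlinarith [mul_le_mul_of_nonneg_left key (sq_nonneg u)]
  calc u / 3 = Real.sqrt ((u / 3) ^ 2) := (Real.sqrt_sq (by positivity)).symm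
  _ ≤ _ := Real.sqrt_le_sqrt h9

/-- The witness family. -/
noncomputable def ff (m : ℕ) (z : ℂ) : EuclideanSpace ℂ (Fin 2) :=
  pt (Complex.exp ((m : ℂ) * z ^ 2)) (Complex.exp (-I * ((m : ℂ) * z ^ 2)))

lemma ff_diff (m : ℕ) : Differentiable ℂ (ff m) := by
  have h : Differentiable ℂ (fun z : ℂ => (![Complex.exp ((m : ℂ) * z ^ 2),
      Complex.exp (-I * ((m : ℂ) * z ^ 2))] : Fin 2 → ℂ)) := by
    rw [differentiable_pi]
    intro i
    fin_cases i
    · simpa using (Differentiable.cexp (by fun_prop) :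
        Differentiable ℂ fun z : ℂ => Complex.exp ((m : ℂ) * z ^ 2))
    · simpa using (Differentiable.cexp (by fun_prop) :
        Differentiable ℂ fun z : ℂ => Complex.exp (-I * ((m : ℂ) * z ^ 2)))
  exact ((EuclideanSpace.equiv (Fin 2) ℂ).symm.differentiable).comp h

lemma ff_zero (m : ℕ) : ff m 0 = pt 1 1 := by
  unfold ff
  norm_num

end Aux

/-- **`(ℂ*)²` is not of `E_FS`-limit type.**
There is a family `{f m}` of holomorphic maps from the unit disc to `(ℂ*)²` which is
not normal (as a family of maps into `(ℂ*)²`) and not compactly divergent, but for which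
no rescaled sequence `ξ ↦ f (idx j) (p j + ρ j • ξ)` converges uniformly on compact
subsets of `ℂ` to a non-constant holomorphic curve `ℂ → (ℂ*)²` with bounded
Fubini–Study derivative. -/
theorem stmt4 :
    ∃ f : ℕ → ℂ → EuclideanSpace ℂ (Fin 2),
      -- each member is holomorphic on the unit disc with values in (ℂ*)²
      (∀ m, DifferentiableOn ℂ (f m) (ball (0 : ℂ) 1)) ∧
      (∀ m, ∀ z ∈ ball (0 : ℂ) 1, f m z ∈ cStarSq) ∧
      -- the family is not normal (as a family of maps into (ℂ*)²)
      (¬ ∀ s : ℕ → ℕ, ∃ (σ : ℕ → ℕ) (g : ℂ → EuclideanSpace ℂ (Fin 2)), StrictMono σ ∧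
          DifferentiableOn ℂ g (ball (0 : ℂ) 1) ∧
          (∀ z ∈ ball (0 : ℂ) 1, g z ∈ cStarSq) ∧
          ∀ K ⊆ ball (0 : ℂ) 1, IsCompact K →
            TendstoUniformlyOn (fun j => f (s (σ j))) g atTop K) ∧
      -- the family is not compactly divergent
      (¬ ∃ s : ℕ → ℕ, ∀ K ⊆ ball (0 : ℂ) 1, IsCompact K →
          ∀ L : Set (EuclideanSpace ℂ (Fin 2)), L ⊆ cStarSq → IsCompact L →
            ∀ᶠ j in atTop, ∀ x ∈ K, f (s j) x ∉ L) ∧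
      -- but no rescaled sequence converges to a non-constant E_FS-Brody curve in (ℂ*)²
      ¬ ∃ (p : ℕ → ℂ) (p₀ : ℂ) (idx : ℕ → ℕ) (ρ : ℕ → ℝ)
          (φ : ℂ → EuclideanSpace ℂ (Fin 2)),
          (∀ j, p j ∈ ball (0 : ℂ) 1) ∧ p₀ ∈ ball (0 : ℂ) 1 ∧
          Tendsto p atTop (𝓝 p₀) ∧
          (∀ j, 0 < ρ j) ∧ Tendsto ρ atTop (𝓝 0) ∧
          Differentiable ℂ φ ∧
          (∀ ξ : ℂ, φ ξ ∈ cStarSq) ∧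
          (¬ ∃ c, ∀ ξ : ℂ, φ ξ = c) ∧
          (∃ C : ℝ, ∀ ξ : ℂ, fubiniStudyLength2 (φ ξ) (deriv φ ξ) ≤ C) ∧
          (∀ K : Set ℂ, IsCompact K →
            TendstoUniformlyOn (fun j ξ => f (idx j) (p j + (ρ j : ℂ) * ξ)) φ atTop K) := by
  classical
  refine ⟨ff, fun m => (ff_diff m).differentiableOn, ?_, ?_, ?_, ?_⟩
  · -- values in cStarSq
    intro m z _
    exact ⟨Complex.exp_ne_zero _, Complex.exp_ne_zero _⟩
  · -- not normal
    intro h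
    obtain ⟨σ, g, hσ, -, -, hK⟩ := h id
    have hhalf : ({(1/2 : ℂ)} : Set ℂ) ⊆ ball (0:ℂ) 1 := by
      intro x hx
      simp only [Set.mem_singleton_iff] at hx
      subst hx
      have : (1/2 : ℂ) = ((1/2 : ℝ) : ℂ) := by norm_num
      simp [mem_ball, Complex.dist_eq, this, Complex.norm_real]
      norm_num
    have hconv := (hK {(1/2 : ℂ)} hhalf isCompact_singleton).tendsto_at rfl
    have hnorm : Tendsto (fun j => ‖ff (σ j) (1/2 : ℂ)‖) atTop (𝓝 ‖g (1/2 : ℂ)‖) :=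
      hconv.norm
    have hlow : ∀ j : ℕ, 1 + (j : ℝ)/4 ≤ ‖ff (σ j) (1/2 : ℂ)‖ := by
      intro j
      have hcast : ((σ j : ℂ) * (1/2 : ℂ) ^ 2) = (((σ j : ℝ)/4 : ℝ) : ℂ) := by
        push_cast; ring
      have h1 : ‖Complex.exp ((σ j : ℂ) * (1/2 : ℂ) ^ 2)‖ = Real.exp ((σ j : ℝ)/4) := by
        rw [hcast, Complex.norm_exp]
        simp
      have h2 : ‖Complex.exp ((σ j : ℂ) * (1/2 : ℂ) ^ 2)‖ ≤ ‖ff (σ j) (1/2 : ℂ)‖ :=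
        norm_pt_ge _ _
      have h3 : (σ j : ℝ)/4 + 1 ≤ Real.exp ((σ j : ℝ)/4) := Real.add_one_le_exp _
      have h4 : (j : ℝ) ≤ (σ j : ℝ) := by exact_mod_cast hσ.le_apply
      rw [h1] at h2
      linarith
    have hdiv : Tendsto (fun j : ℕ => ‖ff (σ j) (1/2 : ℂ)‖) atTop atTop := by
      apply tendsto_atTop_mono hlow
      apply tendsto_atTop_add_const_left
      exact (tendsto_natCast_atTop_atTop).atTop_div_const (by norm_num)
    exact not_tendsto_atTop_of_tendsto_nhds hnorm hdiv
  · -- not compactly divergent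
    rintro ⟨s, hs⟩
    have h0 : ({(0:ℂ)} : Set ℂ) ⊆ ball (0:ℂ) 1 := by
      intro x hx
      simp only [Set.mem_singleton_iff] at hx
      subst hx
      simp [mem_ball]
    have hL : ({pt 1 1} : Set (EuclideanSpace ℂ (Fin 2))) ⊆ cStarSq := by
      intro x hx
      simp only [Set.mem_singleton_iff] at hx
      subst hx
      exact ⟨one_ne_zero, one_ne_zero⟩
    have := hs {(0:ℂ)} h0 isCompact_singleton {pt 1 1} hL isCompact_singleton
    obtain ⟨j, hj⟩ := this.exists
    exact hj 0 rfl (by rw [ff_zero]; rfl)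
  · -- no rescaled Brody limit
    rintro ⟨p, p₀, idx, ρ, φ, -, -, -, hρpos, -, -, hφstar, hφnc, ⟨C, hC⟩, hconv⟩
    set A : ℕ → ℂ → ℂ := fun j ξ => (idx j : ℂ) * (p j + (ρ j : ℂ) * ξ) ^ 2 with hA_def
    have hpt : ∀ ξ : ℂ, Tendsto (fun j => ff (idx j) (p j + (ρ j : ℂ) * ξ)) atTop (𝓝 (φ ξ)) :=
      fun ξ => (hconv {ξ} isCompact_singleton).tendsto_at rfl
    have h1 : ∀ ξ : ℂ, Tendsto (fun j => Complex.exp (A j ξ)) atTop (𝓝 (φ ξ 0)) := by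
      intro ξ
      exact ((EuclideanSpace.proj (0 : Fin 2) (𝕜 := ℂ)).continuous.tendsto (φ ξ)).comp (hpt ξ)
    have h2 : ∀ ξ : ℂ, Tendsto (fun j => Complex.exp (-Complex.I * A j ξ)) atTop
        (𝓝 (φ ξ 1)) := by
      intro ξ
      exact ((EuclideanSpace.proj (1 : Fin 2) (𝕜 := ℂ)).continuous.tendsto (φ ξ)).comp (hpt ξ)
    -- the limit quadratic polynomial
    set Λ : ℂ → ℂ := fun ξ => ((Real.log ‖φ ξ 0‖ : ℝ) : ℂ)
        + ((Real.log ‖φ ξ 1‖ : ℝ) : ℂ) * Complex.I with hΛ_def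
    have hre : ∀ ξ : ℂ, Tendsto (fun j => (A j ξ).re) atTop (𝓝 (Real.log ‖φ ξ 0‖)) := by
      intro ξ
      have hne : ‖φ ξ 0‖ ≠ 0 := norm_ne_zero_iff.mpr (hφstar ξ).1
      have hn := (h1 ξ).norm
      have heq : (fun j => ‖Complex.exp (A j ξ)‖) = fun j => Real.exp ((A j ξ).re) := by
        funext j
        rw [Complex.norm_exp]
      rw [heq] at hn
      have := hn.log hne
      simpa [Real.log_exp] using this
    have him : ∀ ξ : ℂ, Tendsto (fun j => (A j ξ).im) atTop (𝓝 (Real.log ‖φ ξ 1‖)) := by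
      intro ξ
      have hne : ‖φ ξ 1‖ ≠ 0 := norm_ne_zero_iff.mpr (hφstar ξ).2
      have hn := (h2 ξ).norm
      have heq : (fun j => ‖Complex.exp (-Complex.I * A j ξ)‖)
          = fun j => Real.exp ((A j ξ).im) := by
        funext j
        rw [Complex.norm_exp]
        congr 1
        simp [Complex.mul_re]
      rw [heq] at hn
      have := hn.log hne
      simpa [Real.log_exp] using this
    have hA : ∀ ξ : ℂ, Tendsto (fun j => A j ξ) atTop (𝓝 (Λ ξ)) := by
      intro ξ
      have hre' : Tendsto (fun j => (((A j ξ).re : ℝ) : ℂ)) atTop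
          (𝓝 ((Real.log ‖φ ξ 0‖ : ℝ) : ℂ)) :=
        (Complex.continuous_ofReal.tendsto _).comp (hre ξ)
      have him' : Tendsto (fun j => (((A j ξ).im : ℝ) : ℂ) * Complex.I) atTop
          (𝓝 (((Real.log ‖φ ξ 1‖ : ℝ) : ℂ) * Complex.I)) :=
        ((Complex.continuous_ofReal.tendsto _).comp (him ξ)).mul_const Complex.I
      have := hre'.add him'
      have heq : (fun j => (((A j ξ).re : ℝ) : ℂ) + (((A j ξ).im : ℝ) : ℂ) * Complex.I)
          = fun j => A j ξ := by
        funext j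
        exact Complex.re_add_im _
      rw [heq] at this
      exact this
    -- coefficients
    set aa : ℂ := (Λ 1 + Λ (-1)) / 2 - Λ 0 with haa_def
    set bb : ℂ := (Λ 1 - Λ (-1)) / 2 with hbb_def
    set cc : ℂ := Λ 0 with hcc_def
    have hca : Tendsto (fun j => (idx j : ℂ) * (p j) ^ 2) atTop (𝓝 cc) := by
      have heq : (fun j => (idx j : ℂ) * (p j) ^ 2) = fun j => A j 0 := by
        funext j; simp [hA_def]
      rw [heq]; exact hA 0
    have hba : Tendsto (fun j => 2 * (idx j : ℂ) * p j * (ρ j : ℂ)) atTop (𝓝 bb) := by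
      have heq : (fun j => 2 * (idx j : ℂ) * p j * (ρ j : ℂ))
          = fun j => (A j 1 - A j (-1)) / 2 := by
        funext j; simp only [hA_def]; ring
      rw [heq]
      exact ((hA 1).sub (hA (-1))).div_const 2
    have haha : Tendsto (fun j => (idx j : ℂ) * (ρ j : ℂ) ^ 2) atTop (𝓝 aa) := by
      have heq : (fun j => (idx j : ℂ) * (ρ j : ℂ) ^ 2)
          = fun j => (A j 1 + A j (-1)) / 2 - A j 0 := by
        funext j; simp only [hA_def]; ring
      rw [heq]
      exact (((hA 1).add (hA (-1))).div_const 2).sub (hA 0)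
    -- Λ is the quadratic polynomial
    have hΛpoly : ∀ ξ : ℂ, Λ ξ = cc + bb * ξ + aa * ξ ^ 2 := by
      intro ξ
      refine tendsto_nhds_unique (hA ξ) ?_
      have heq : (fun j => (idx j : ℂ) * (p j) ^ 2
            + (2 * (idx j : ℂ) * p j * (ρ j : ℂ)) * ξ
            + ((idx j : ℂ) * (ρ j : ℂ) ^ 2) * ξ ^ 2) = fun j => A j ξ := by
        funext j; simp only [hA_def]; ring
      rw [← heq]
      exact (hca.add (hba.mul_const ξ)).add (haha.mul_const (ξ ^ 2))
    -- aa is a nonnegative real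
    have hacast : ∀ j, (idx j : ℂ) * (ρ j : ℂ) ^ 2 = (((idx j : ℝ) * (ρ j) ^ 2 : ℝ) : ℂ) := by
      intro j; push_cast; ring
    have haim : aa.im = 0 := by
      have := (Complex.continuous_im.tendsto aa).comp haha
      have heq : (fun j => ((idx j : ℂ) * (ρ j : ℂ) ^ 2).im) = fun _ => (0:ℝ) := by
        funext j; rw [hacast j, Complex.ofReal_im]
      rw [Function.comp_def, heq] at this
      exact (tendsto_nhds_unique tendsto_const_nhds this).symm
    have hare : 0 ≤ aa.re := by
      have hter := (Complex.continuous_re.tendsto aa).comp haha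
      rw [Function.comp_def] at hter
      refine ge_of_tendsto' hter (fun j => ?_)
      rw [hacast j, Complex.ofReal_re]
      positivity
    -- the discriminant relation
    have hb2 : bb ^ 2 = 4 * (aa * cc) := by
      refine tendsto_nhds_unique (hba.pow 2) ?_
      have heq : (fun j => (2 * (idx j : ℂ) * p j * (ρ j : ℂ)) ^ 2)
          = fun j => 4 * (((idx j : ℂ) * (ρ j : ℂ) ^ 2) * ((idx j : ℂ) * (p j) ^ 2)) := by
        funext j; ring
      rw [heq]
      exact (haha.mul hca).const_mul 4
    -- identify the components of φ
    have hφ0 : ∀ ξ : ℂ, φ ξ 0 = Complex.exp (Λ ξ) := by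
      intro ξ
      exact tendsto_nhds_unique (h1 ξ) ((Complex.continuous_exp.tendsto _).comp (hA ξ))
    have hφ1 : ∀ ξ : ℂ, φ ξ 1 = Complex.exp (-Complex.I * Λ ξ) := by
      intro ξ
      refine tendsto_nhds_unique (h2 ξ) ?_
      have hcont : Continuous fun w : ℂ => Complex.exp (-Complex.I * w) := by fun_prop
      exact (hcont.tendsto _).comp (hA ξ)
    rcases eq_or_ne aa 0 with haz | hanz
    · -- degenerate case: φ is constant
      have hbz : bb = 0 := by
        have : bb ^ 2 = 0 := by rw [hb2, haz]; ring
        exact sq_eq_zero_iff.mp this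
      refine hφnc ⟨pt (Complex.exp cc) (Complex.exp (-Complex.I * cc)), fun ξ => ?_⟩
      have hΛc : Λ ξ = cc := by rw [hΛpoly ξ, haz, hbz]; ring
      rw [pt_ext (φ ξ), hφ0 ξ, hφ1 ξ, hΛc]
    · -- nondegenerate case: unbounded Fubini–Study derivative
      have hrepos : 0 < aa.re := by
        rcases lt_or_eq_of_le hare with h | h
        · exact h
        · exfalso; exact hanz (Complex.ext h.symm haim)
      set r : ℝ := aa.re with hr_def
      have haar : aa = (r : ℂ) := Complex.ext rfl haim
      set ξ₀ : ℂ := -bb / (2 * aa) with hξ₀_def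
      have hccval : cc = bb ^ 2 / (4 * aa) := by
        field_simp
        linear_combination -hb2
      have hΛsq : ∀ ξ : ℂ, Λ ξ = aa * (ξ - ξ₀) ^ 2 := by
        intro ξ
        rw [hΛpoly ξ, hccval, hξ₀_def]
        field_simp
        ring
      -- the explicit formula for φ
      set ψ : ℂ → EuclideanSpace ℂ (Fin 2) := fun ξ =>
        pt (Complex.exp (aa * (ξ - ξ₀) ^ 2))
           (Complex.exp ((-Complex.I * aa) * (ξ - ξ₀) ^ 2)) with hψ_def
      have hφeq : φ = ψ := by
        funext ξ
        have hm : -Complex.I * (aa * (ξ - ξ₀) ^ 2)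
            = (-Complex.I * aa) * (ξ - ξ₀) ^ 2 := by ring
        rw [pt_ext (φ ξ), hφ0 ξ, hφ1 ξ, hΛsq ξ, hm]
      -- derivative of ψ
      have hder : ∀ ξ : ℂ, HasDerivAt ψ
          (pt (Complex.exp (aa * (ξ - ξ₀) ^ 2) * (aa * (2 * (ξ - ξ₀))))
              (Complex.exp ((-Complex.I * aa) * (ξ - ξ₀) ^ 2)
                * ((-Complex.I * aa) * (2 * (ξ - ξ₀))))) ξ := by
        intro ξ
        have hq : HasDerivAt (fun ξ : ℂ => (ξ - ξ₀) ^ 2) (2 * (ξ - ξ₀)) ξ := by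
          simpa using ((hasDerivAt_id ξ).sub_const ξ₀).fun_pow 2
        have he1 : HasDerivAt (fun ξ : ℂ => Complex.exp (aa * (ξ - ξ₀) ^ 2))
            (Complex.exp (aa * (ξ - ξ₀) ^ 2) * (aa * (2 * (ξ - ξ₀)))) ξ :=
          (hq.const_mul aa).cexp
        have he2 : HasDerivAt
            (fun ξ : ℂ => Complex.exp ((-Complex.I * aa) * (ξ - ξ₀) ^ 2))
            (Complex.exp ((-Complex.I * aa) * (ξ - ξ₀) ^ 2)
              * ((-Complex.I * aa) * (2 * (ξ - ξ₀)))) ξ :=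
          (hq.const_mul (-Complex.I * aa)).cexp
        have hpi : HasDerivAt (fun ξ : ℂ =>
            (![Complex.exp (aa * (ξ - ξ₀) ^ 2),
               Complex.exp ((-Complex.I * aa) * (ξ - ξ₀) ^ 2)] : Fin 2 → ℂ))
            (![Complex.exp (aa * (ξ - ξ₀) ^ 2) * (aa * (2 * (ξ - ξ₀))),
               Complex.exp ((-Complex.I * aa) * (ξ - ξ₀) ^ 2)
                 * ((-Complex.I * aa) * (2 * (ξ - ξ₀)))]) ξ := by
          rw [hasDerivAt_pi]
          intro i
          fin_cases i
          · simpa using he1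
          · simpa using he2
        exact ((EuclideanSpace.equiv (Fin 2) ℂ).symm.toContinuousLinearMap.hasFDerivAt
          ).comp_hasDerivAt ξ hpi
      -- a uniform lower bound for the Fubini–Study length leads to a contradiction
      have hC0 : 0 ≤ C := le_trans (Real.sqrt_nonneg _) (hC 0)
      have hbound : ∀ t : ℝ, 0 < t → 2 * r * t / 3 ≤ C := by
        intro t ht
        have hsub : (ξ₀ + (t : ℂ) * Complex.I) - ξ₀ = (t : ℂ) * Complex.I := by ring
        have hI2 : ((t : ℂ) * Complex.I) ^ 2 = -(((t ^ 2 : ℝ)) : ℂ) := by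
          rw [mul_pow, Complex.I_sq]
          push_cast
          ring
        have hθ1 : aa * ((ξ₀ + (t : ℂ) * Complex.I) - ξ₀) ^ 2 = ((-(r * t ^ 2) : ℝ) : ℂ) := by
          rw [hsub, haar, hI2]
          push_cast
          ring
        have hθ2 : (-Complex.I * aa) * ((ξ₀ + (t : ℂ) * Complex.I) - ξ₀) ^ 2
            = (((r * t ^ 2 : ℝ)) : ℂ) * Complex.I := by
          rw [hsub, haar, hI2]
          push_cast
          ring
        have hεpos : 0 < Real.exp (-(r * t ^ 2)) := Real.exp_pos _
        have hε1 : Real.exp (-(r * t ^ 2)) ≤ 1 := by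
          rw [show (1 : ℝ) = Real.exp 0 from (Real.exp_zero).symm]
          apply Real.exp_le_exp.mpr
          nlinarith
        have hwn : ‖Complex.exp (((r * t ^ 2 : ℝ) : ℂ) * Complex.I)‖ = 1 := by
          exact Complex.norm_exp_ofReal_mul_I _
        have hu : (0:ℝ) ≤ 2 * r * t := by positivity
        have hz : ψ (ξ₀ + (t : ℂ) * Complex.I)
            = pt ((Real.exp (-(r * t ^ 2)) : ℝ) : ℂ)
                 (Complex.exp (((r * t ^ 2 : ℝ) : ℂ) * Complex.I)) := by
          show pt (Complex.exp (aa * ((ξ₀ + (t : ℂ) * Complex.I) - ξ₀) ^ 2))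
              (Complex.exp ((-Complex.I * aa) * ((ξ₀ + (t : ℂ) * Complex.I) - ξ₀) ^ 2)) = _
          rw [hθ1, hθ2, Complex.ofReal_exp]
        have hd : deriv ψ (ξ₀ + (t : ℂ) * Complex.I)
            = pt (((Real.exp (-(r * t ^ 2)) : ℝ) : ℂ) * (((2 * r * t : ℝ) : ℂ) * Complex.I))
                 (Complex.exp (((r * t ^ 2 : ℝ) : ℂ) * Complex.I) * ((2 * r * t : ℝ) : ℂ)) := by
          rw [(hder _).deriv]
          have hc1 : Complex.exp (aa * ((ξ₀ + (t : ℂ) * Complex.I) - ξ₀) ^ 2)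
              * (aa * (2 * ((ξ₀ + (t : ℂ) * Complex.I) - ξ₀)))
              = ((Real.exp (-(r * t ^ 2)) : ℝ) : ℂ) * (((2 * r * t : ℝ) : ℂ) * Complex.I) := by
            rw [hθ1, hsub, haar, Complex.ofReal_exp]
            push_cast
            ring
          have hc2 : Complex.exp ((-Complex.I * aa) * ((ξ₀ + (t : ℂ) * Complex.I) - ξ₀) ^ 2)
              * ((-Complex.I * aa) * (2 * ((ξ₀ + (t : ℂ) * Complex.I) - ξ₀)))
              = Complex.exp (((r * t ^ 2 : ℝ) : ℂ) * Complex.I) * ((2 * r * t : ℝ) : ℂ) := by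
            rw [hθ2, hsub, haar]
            have hII : Complex.I * Complex.I = -1 := Complex.I_mul_I
            have hfac : (-Complex.I * (r : ℂ)) * (2 * ((t : ℂ) * Complex.I))
                = ((2 * r * t : ℝ) : ℂ) := by
              push_cast
              linear_combination (-2 * (r : ℂ) * (t : ℂ)) * hII
            rw [hfac]
          rw [hc1, hc2]
        have hfs := fs_lower (Real.exp (-(r * t ^ 2))) (2 * r * t)
            (Complex.exp (((r * t ^ 2 : ℝ) : ℂ) * Complex.I)) hwn hεpos hε1 hu
        rw [← hz, ← hd] at hfs
        calc 2 * r * t / 3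
            ≤ fubiniStudyLength2 (ψ (ξ₀ + (t : ℂ) * Complex.I))
                (deriv ψ (ξ₀ + (t : ℂ) * Complex.I)) := hfs
        _ ≤ C := by rw [← hφeq]; exact hC _
      have hT : 0 < 3 * (C + 1) / (2 * r) := by
        apply div_pos (by linarith) (by linarith)
      have hfin := hbound _ hT
      have heq : 2 * r * (3 * (C + 1) / (2 * r)) / 3 = C + 1 := by
        field_simp
      rw [heq] at hfin
      linarith
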